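/- (Lemma 4.2, general cluster form.) For an edge e = (u,v) of T, let C(e) ⊆ V consist of u, v, and all endpoints of edges in I(e). Then: (i) the edges of T with both endpoints in C(e) are exactly I(e) ∪ {e}; and (ii) S(e) equals Cut(C(e), V∖C(e)), the set of edges of T with exactly one endpoint in C(e). Consequently, p(e) is the minimum-rank edge with exactly one endpoint in C(e), whenever this cut is nonempty. -/

import Mathlib

/- Single tree setting: `G` is a finite tree with injective edge ranks `r`.
`edgesBetween G e f` is the set of edges strictly between edges `e` and `f`
on the unique tree path connecting them (an edge `g ∉ {e,f}` lies on this path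
iff it belongs to every walk containing both `e` and `f`). -/

open SimpleGraph

variable {V : Type*}

/-- The set of edges lying strictly between edges `e` and `f` on the tree path
connecting them (excluding `e` and `f`). -/
def edgesBetween (G : SimpleGraph V) (e f : Sym2 V) : Set (Sym2 V) :=
  {g | g ∈ G.edgeSet ∧ g ≠ e ∧ g ≠ f ∧
    ∀ (a b : V) (w : G.Walk a b), e ∈ w.edges → f ∈ w.edges → g ∈ w.edges}

/-- `f` is an adjacent superior of `e`: `r e < r f` and every edge `g` on the
path between `e` and `f` satisfies `r g < r e`. -/
def AdjSup (G : SimpleGraph V) (r : Sym2 V → ℕ) (e f : Sym2 V) : Prop :=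
  f ∈ G.edgeSet ∧ r e < r f ∧ ∀ g ∈ edgesBetween G e f, r g < r e

/-- `f` is an adjacent inferior of `e`: `r f < r e` and every edge `g` on the
path between `e` and `f` satisfies `r g < r e`. -/
def AdjInf (G : SimpleGraph V) (r : Sym2 V → ℕ) (e f : Sym2 V) : Prop :=
  f ∈ G.edgeSet ∧ r f < r e ∧ ∀ g ∈ edgesBetween G e f, r g < r e

/-- `f` is the SLD parent of `e`: the minimum-rank adjacent superior of `e`. -/
def IsParent (G : SimpleGraph V) (r : Sym2 V → ℕ) (e f : Sym2 V) : Prop :=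
  AdjSup G r e f ∧ ∀ g, AdjSup G r e g → r f ≤ r g

/-- The spine of `e`: the set of edges obtained by iterating the SLD parent
function starting from `e` (including `e` itself). -/
def spine (G : SimpleGraph V) (r : Sym2 V → ℕ) (e : Sym2 V) : Set (Sym2 V) :=
  {f | Relation.ReflTransGen (IsParent G r) e f}

/-- The cluster `C(e)` of an edge `e`: its endpoints together with all
endpoints of edges in `I(e)`. -/
def cluster (G : SimpleGraph V) (r : Sym2 V → ℕ) (e : Sym2 V) : Set V :=
  {x | x ∈ e ∨ ∃ f, AdjInf G r e f ∧ x ∈ f}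

section Aux
variable {G : SimpleGraph V}

lemma mem_support_of_mem_edge {a b : V} {w : G.Walk a b} {h : Sym2 V} {x : V}
    (hx : x ∈ h) (hh : h ∈ w.edges) : x ∈ w.support := by
  induction h using Sym2.ind with
  | _ c d =>
    rcases Sym2.mem_iff.mp hx with rfl | rfl
    · exact w.fst_mem_support_of_mem_edges hh
    · exact w.snd_mem_support_of_mem_edges hh

lemma strip_first {s x : V} (q : G.Walk s x) (hq : q.IsPath) {h : Sym2 V}
    (hh : h ∈ q.edges) (hs : s ∈ h) :
    ∃ (t : V) (q' : G.Walk t x), q'.IsPath ∧ (∀ h' ∈ q'.edges, h' ∈ q.edges) ∧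
      h ∉ q'.edges ∧ h = s(s, t) ∧ t ∈ h := by
  cases q with
  | nil => simp at hh
  | @cons _ t _ adj q' =>
    rw [SimpleGraph.Walk.cons_isPath_iff] at hq
    rw [SimpleGraph.Walk.edges_cons, List.mem_cons] at hh
    rcases hh with rfl | hh
    · refine ⟨t, q', hq.1, fun h' hh' => by simp [hh'], ?_, rfl, Sym2.mem_mk_right _ _⟩
      intro hcon
      exact hq.2 (mem_support_of_mem_edge (Sym2.mem_mk_left _ _) hcon)
    · exact absurd (mem_support_of_mem_edge hs hh) hq.2

lemma sep (hA : G.IsAcyclic) : ∀ {s x : V} (q : G.Walk s x), q.IsPath →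
    ∀ {h : Sym2 V}, h ∈ q.edges → ∀ (w : G.Walk s x), h ∈ w.edges := by
  intro s x q
  induction q with
  | nil => intro _ h hh; simp at hh
  | @cons s t x adj q' ih =>
    intro hq h hh w
    rw [SimpleGraph.Walk.cons_isPath_iff] at hq
    rw [SimpleGraph.Walk.edges_cons, List.mem_cons] at hh
    have hstq' : s(s, t) ∉ q'.edges := fun hcon =>
      hq.2 (mem_support_of_mem_edge (Sym2.mem_mk_left _ _) hcon)
    rcases hh with rfl | hh
    · have hb : G.IsBridge s(s, t) :=
        (isAcyclic_iff_forall_edge_isBridge.mp hA) adj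
      have := (isBridge_iff_adj_and_forall_walk_mem_edges.mp hb) (w.append q'.reverse)
      rw [SimpleGraph.Walk.edges_append, List.mem_append, SimpleGraph.Walk.edges_reverse,
        List.mem_reverse] at this
      exact this.resolve_right hstq'
    · have := ih hq.1 hh (SimpleGraph.Walk.cons adj.symm w)
      rw [SimpleGraph.Walk.edges_cons, List.mem_cons] at this
      rcases this with heq | hmem
      · exact absurd (heq ▸ hh) (by rwa [Sym2.eq_swap] at hstq')
      · exact hmem

lemma subwalk {a b y z : V} (w : G.Walk a b) (hy : y ∈ w.support) (hz : z ∈ w.support) :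
    ∃ w' : G.Walk y z, ∀ h ∈ w'.edges, h ∈ w.edges := by
  classical
  refine ⟨(w.takeUntil y hy).reverse.append (w.takeUntil z hz), ?_⟩
  intro h hh
  rw [SimpleGraph.Walk.edges_append, List.mem_append, SimpleGraph.Walk.edges_reverse,
    List.mem_reverse] at hh
  rcases hh with hh | hh
  · exact SimpleGraph.Walk.edges_takeUntil_subset _ _ hh
  · exact SimpleGraph.Walk.edges_takeUntil_subset _ _ hh

/-- Any edge of a path from an endpoint of `e` to an endpoint of `g`, other than
`e` and `g` themselves, lies between `e` and `g`. -/
lemma mem_edgesBetween_of_path (hA : G.IsAcyclic) {e g : Sym2 V} {s c : V}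
    (q : G.Walk s c) (hq : q.IsPath) (hs : s ∈ e) (hc : c ∈ g) {h : Sym2 V}
    (hh : h ∈ q.edges) (hhe : h ≠ e) (hhg : h ≠ g) : h ∈ edgesBetween G e g := by
  refine ⟨q.edges_subset_edgeSet hh, hhe, hhg, ?_⟩
  intro a b w hew hgw
  have hsw : s ∈ w.support := mem_support_of_mem_edge hs hew
  have hcw : c ∈ w.support := mem_support_of_mem_edge hc hgw
  obtain ⟨w', hw'⟩ := subwalk w hsw hcw
  exact hw' h (sep hA q hq hh w')

/-- Reachability from an endpoint of `e` avoiding `e` with all edges of small rank. -/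
def Reach (G : SimpleGraph V) (r : Sym2 V → ℕ) (e : Sym2 V) (x : V) : Prop :=
  ∃ (s : V), s ∈ e ∧ ∃ w : G.Walk s x, e ∉ w.edges ∧ ∀ h ∈ w.edges, r h < r e

lemma reach_endpoint {r : Sym2 V → ℕ} {e : Sym2 V} {x : V} (hx : x ∈ e) :
    Reach G r e x :=
  ⟨x, hx, SimpleGraph.Walk.nil, by simp, by simp⟩

/-- If `a` is reachable and `g = s(a,b)` is an edge, all edges between `e` and `g`
have small rank. -/
lemma between_small {r : Sym2 V → ℕ} {e : Sym2 V} (he : e ∈ G.edgeSet)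
    {g : Sym2 V} {a b : V} (hgab : g = s(a, b)) (hg : g ∈ G.edgeSet)
    (hra : Reach G r e a) : ∀ h ∈ edgesBetween G e g, r h < r e := by
  obtain ⟨s, hs, w, hew, hsmall⟩ := hra
  obtain ⟨s', hes'⟩ := Sym2.mem_iff_exists.mp hs
  have hadj : G.Adj s s' := by rw [← SimpleGraph.mem_edgeSet, ← hes']; exact he
  have hadjg : G.Adj a b := by rw [← SimpleGraph.mem_edgeSet, ← hgab]; exact hg
  intro h hh
  obtain ⟨-, hhe, hhg, hall⟩ := hh
  have := hall s' b (SimpleGraph.Walk.cons hadj.symm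
      (w.append (SimpleGraph.Walk.cons hadjg SimpleGraph.Walk.nil)))
    (by simp [← Sym2.eq_swap, ← hes'])
    (by simp [hgab])
  simp only [SimpleGraph.Walk.edges_cons, SimpleGraph.Walk.edges_append,
    SimpleGraph.Walk.edges_nil, List.mem_cons, List.mem_append] at this
  rcases this with heq | hmem | hmem
  · exact absurd (heq.trans (Sym2.eq_swap.trans hes'.symm)) hhe
  · exact hsmall h hmem
  · rcases hmem with heq | hfalse
    · exact absurd (heq.trans hgab.symm) hhg
    · simp at hfalse

lemma sym2_rep (z : Sym2 V) : ∃ a b, z = s(a, b) := by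
  induction z using Sym2.ind with
  | _ a b => exact ⟨a, b, rfl⟩

lemma cluster_of_walk {r : Sym2 V → ℕ} {e : Sym2 V} (he : e ∈ G.edgeSet)
    {x s : V} (w : G.Walk x s) (hw : w.IsPath) (hs : s ∈ e) (hew : e ∉ w.edges)
    (hsmall : ∀ h ∈ w.edges, r h < r e) : x ∈ cluster G r e := by
  cases w with
  | nil => exact Or.inl hs
  | @cons _ c _ adj w' =>
    refine Or.inr ⟨s(x, c), ⟨adj, hsmall _ (by simp), ?_⟩, Sym2.mem_mk_left _ _⟩
    refine between_small he (Sym2.eq_swap : s(x, c) = s(c, x)) adj ?_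
    refine ⟨s, hs, w'.reverse, ?_, ?_⟩
    · rw [SimpleGraph.Walk.edges_reverse, List.mem_reverse]
      exact fun hcon => hew (by simp [hcon])
    · intro h hh
      rw [SimpleGraph.Walk.edges_reverse, List.mem_reverse] at hh
      exact hsmall h (by simp [hh])

lemma reach_cluster {r : Sym2 V → ℕ} {e : Sym2 V} (he : e ∈ G.edgeSet)
    {x : V} (hx : Reach G r e x) : x ∈ cluster G r e := by
  classical
  obtain ⟨s, hs, w, hew, hsmall⟩ := hx
  have hp : w.bypass.IsPath := w.bypass_isPath
  have hsub := w.edges_bypass_subset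
  refine cluster_of_walk he w.bypass.reverse hp.reverse hs ?_ ?_
  · rw [SimpleGraph.Walk.edges_reverse, List.mem_reverse]
    exact fun hcon => hew (hsub hcon)
  · intro h hh
    rw [SimpleGraph.Walk.edges_reverse, List.mem_reverse] at hh
    exact hsmall h (hsub hh)

/-- Hard direction: every cluster element is reachable by a small path. -/
lemma cluster_reach (hT : G.IsTree) {r : Sym2 V → ℕ} {e : Sym2 V}
    (he : e ∈ G.edgeSet) {x : V} (hx : x ∈ cluster G r e) : Reach G r e x := by
  classical
  rcases hx with hx | ⟨f, ⟨hfE, hfr, hfbtw⟩, hxf⟩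
  · exact reach_endpoint hx
  obtain ⟨u, v, huv⟩ := sym2_rep e
  have hu : u ∈ e := huv ▸ Sym2.mem_mk_left _ _
  set p := ((hT.isConnected.preconnected u x).some).bypass with hpdef
  have hp : p.IsPath := SimpleGraph.Walk.bypass_isPath _
  have key : ∃ (t : V) (q : G.Walk t x), q.IsPath ∧ t ∈ e ∧ e ∉ q.edges := by
    by_cases hep : e ∈ p.edges
    · obtain ⟨t, q, hq, _, henq, _, hte⟩ := strip_first p hp hep hu
      exact ⟨t, q, hq, hte, henq⟩
    · exact ⟨u, p, hp, hu, hep⟩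
  obtain ⟨t, q, hq, hte, henq⟩ := key
  refine ⟨t, hte, q, henq, ?_⟩
  intro h hh
  by_cases hhf : h = f
  · exact hhf ▸ hfr
  · have hne : h ≠ e := fun hcon => henq (hcon ▸ hh)
    exact hfbtw h (mem_edgesBetween_of_path hT.2 q hq hte hxf hh hne hhf)

lemma rank_lt_of_reach_reach (hT : G.IsTree) {r : Sym2 V → ℕ} {e : Sym2 V}
    (he : e ∈ G.edgeSet)
    {g : Sym2 V} {a b : V} (hgE : g ∈ G.edgeSet) (hgab : g = s(a, b))
    (hra : Reach G r e a) (hrb : Reach G r e b) (hge : g ≠ e) : r g < r e := by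
  by_contra hge'
  obtain ⟨s₁, hs₁, w₁, he₁, hm₁⟩ := hra
  obtain ⟨s₂, hs₂, w₂, he₂, hm₂⟩ := hrb
  have hmid : ∃ m : G.Walk s₁ s₂, ∀ h ∈ m.edges, h = e := by
    by_cases hss : s₁ = s₂
    · subst hss; exact ⟨SimpleGraph.Walk.nil, by simp⟩
    · have heq : e = s(s₁, s₂) := (Sym2.mem_and_mem_iff hss).mp ⟨hs₁, hs₂⟩
      have hadj : G.Adj s₁ s₂ := by rw [← SimpleGraph.mem_edgeSet, ← heq]; exact he
      exact ⟨SimpleGraph.Walk.cons hadj SimpleGraph.Walk.nil, by simp [heq]⟩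
  obtain ⟨m, hm⟩ := hmid
  have hb : G.IsBridge g := (isAcyclic_iff_forall_edge_isBridge.mp hT.2) hgE
  rw [hgab, isBridge_iff_adj_and_forall_walk_mem_edges] at hb
  have := hb (w₁.reverse.append (m.append w₂))
  rw [SimpleGraph.Walk.edges_append, SimpleGraph.Walk.edges_append, List.mem_append,
    List.mem_append, SimpleGraph.Walk.edges_reverse, List.mem_reverse] at this
  rcases this with h1 | h2 | h3
  · exact hge' (hgab.symm ▸ hm₁ _ h1)
  · exact hge (hgab.trans (hm _ h2))
  · exact hge' (hgab.symm ▸ hm₂ _ h3)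

end Aux

/-- Lemma 4.2 (general cluster form): (i) the edges of `T` with both endpoints
in `C(e)` are exactly `I(e) ∪ {e}`; (ii) `S(e) = Cut(C(e), V∖C(e))`;
consequently `p(e)` is the minimum-rank edge with exactly one endpoint in
`C(e)`, whenever this cut is nonempty. -/
theorem stmt13 [Fintype V] (G : SimpleGraph V) (hT : G.IsTree)
    (r : Sym2 V → ℕ) (hr : Set.InjOn r G.edgeSet)
    (e : Sym2 V) (he : e ∈ G.edgeSet) :
    (∀ g ∈ G.edgeSet, (∀ x ∈ g, x ∈ cluster G r e) ↔ (AdjInf G r e g ∨ g = e)) ∧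
    (∀ g, AdjSup G r e g ↔ (g ∈ G.edgeSet ∧
      ∃ a b, g = s(a, b) ∧ a ∈ cluster G r e ∧ b ∉ cluster G r e)) ∧
    (∀ f, IsParent G r e f ↔
      ((f ∈ G.edgeSet ∧ ∃ a b, f = s(a, b) ∧ a ∈ cluster G r e ∧ b ∉ cluster G r e) ∧
        ∀ g, (g ∈ G.edgeSet ∧
            ∃ a b, g = s(a, b) ∧ a ∈ cluster G r e ∧ b ∉ cluster G r e) →
          r f ≤ r g)) := by
  classical
  have hA : G.IsAcyclic := hT.2
  have part2 : ∀ g, AdjSup G r e g ↔ (g ∈ G.edgeSet ∧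
      ∃ a b, g = s(a, b) ∧ a ∈ cluster G r e ∧ b ∉ cluster G r e) := by
    intro g
    constructor
    · rintro ⟨hgE, hlt, hbtw⟩
      refine ⟨hgE, ?_⟩
      obtain ⟨a, b, hgab⟩ := sym2_rep g
      obtain ⟨u, v, huv⟩ := sym2_rep e
      have hu : u ∈ e := by rw [huv]; exact Sym2.mem_mk_left _ _
      have hbg : b ∈ g := by rw [hgab]; exact Sym2.mem_mk_right _ _
      set p := ((hT.isConnected.preconnected u b).some).bypass with hpdef
      have hp : p.IsPath := SimpleGraph.Walk.bypass_isPath _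
      have key1 : ∃ (c : V) (q : G.Walk u c), q.IsPath ∧ c ∈ g ∧ g ∉ q.edges := by
        by_cases hgp : g ∈ p.edges
        · have hgp' : g ∈ p.reverse.edges := by
            rwa [SimpleGraph.Walk.edges_reverse, List.mem_reverse]
          obtain ⟨t, q, hq, hsub, hgnq, hgbt, htg⟩ :=
            strip_first p.reverse hp.reverse hgp' hbg
          refine ⟨t, q.reverse, hq.reverse, htg, ?_⟩
          rw [SimpleGraph.Walk.edges_reverse, List.mem_reverse]
          exact hgnq
        · exact ⟨b, p, hp, hbg, hgp⟩
      obtain ⟨c, q, hq, hcg, hgq⟩ := key1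
      have key2 : ∃ (t : V) (q₂ : G.Walk t c),
          q₂.IsPath ∧ t ∈ e ∧ e ∉ q₂.edges ∧ g ∉ q₂.edges := by
        by_cases hep : e ∈ q.edges
        · obtain ⟨t, q₂, hq₂, hsub, henq, _, hte⟩ := strip_first q hq hep hu
          exact ⟨t, q₂, hq₂, hte, henq, fun hcon => hgq (hsub _ hcon)⟩
        · exact ⟨u, q, hq, hu, hep, hgq⟩
      obtain ⟨t, q₂, hq₂, hte, heq₂, hgq₂⟩ := key2
      have hreach : Reach G r e c := by
        refine ⟨t, hte, q₂, heq₂, fun h hh => ?_⟩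
        have hne : h ≠ e := fun hcon => heq₂ (hcon ▸ hh)
        have hng : h ≠ g := fun hcon => hgq₂ (hcon ▸ hh)
        exact hbtw h (mem_edgesBetween_of_path hA q₂ hq₂ hte hcg hh hne hng)
      obtain ⟨d, hgcd⟩ := Sym2.mem_iff_exists.mp hcg
      refine ⟨c, d, hgcd, reach_cluster he hreach, ?_⟩
      intro hdc
      have hrd : Reach G r e d := cluster_reach hT he hdc
      have hge : g ≠ e := fun hcon => absurd (hcon ▸ hlt) (lt_irrefl _)
      exact absurd (rank_lt_of_reach_reach hT he hgE hgcd hreach hrd hge)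
        (not_lt.mpr (le_of_lt hlt))
    · rintro ⟨hgE, a, b, hgab, ha, hb⟩
      have hra : Reach G r e a := cluster_reach hT he ha
      have hge : g ≠ e := by
        intro hcon
        apply hb
        have hbg : b ∈ g := by rw [hgab]; exact Sym2.mem_mk_right _ _
        exact Or.inl (hcon ▸ hbg)
      have hlt : r e < r g := by
        rcases lt_trichotomy (r e) (r g) with h | h | h
        · exact h
        · exact absurd (hr hgE he h.symm) hge
        · exfalso
          apply hb
          obtain ⟨s, hs, w, hew, hsm⟩ := hra
          have hadjg : G.Adj a b := by rw [← SimpleGraph.mem_edgeSet, ← hgab]; exact hgE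
          refine reach_cluster he
            ⟨s, hs, w.append (SimpleGraph.Walk.cons hadjg SimpleGraph.Walk.nil), ?_, ?_⟩
          · rw [SimpleGraph.Walk.edges_append]
            simp only [SimpleGraph.Walk.edges_cons, SimpleGraph.Walk.edges_nil,
              List.mem_append, List.mem_cons, List.not_mem_nil, or_false]
            rintro (hcon | hcon)
            · exact hew hcon
            · exact hge (hgab.trans hcon.symm)
          · intro h' hh'
            rw [SimpleGraph.Walk.edges_append] at hh'
            simp only [SimpleGraph.Walk.edges_cons, SimpleGraph.Walk.edges_nil,
              List.mem_append, List.mem_cons, List.not_mem_nil, or_false] at hh'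
            rcases hh' with hh' | hh'
            · exact hsm h' hh'
            · rw [hh', ← hgab]; exact h
      exact ⟨hgE, hlt, between_small he hgab hgE hra⟩
  have part1 : ∀ g ∈ G.edgeSet,
      (∀ x ∈ g, x ∈ cluster G r e) ↔ (AdjInf G r e g ∨ g = e) := by
    intro g hgE
    constructor
    · intro hall
      by_cases hge : g = e
      · exact Or.inr hge
      obtain ⟨a, b, hgab⟩ := sym2_rep g
      have hra := cluster_reach hT he (hall a (by rw [hgab]; exact Sym2.mem_mk_left _ _))
      have hrb := cluster_reach hT he (hall b (by rw [hgab]; exact Sym2.mem_mk_right _ _))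
      exact Or.inl ⟨hgE, rank_lt_of_reach_reach hT he hgE hgab hra hrb hge,
        between_small he hgab hgE hra⟩
    · rintro (hinf | rfl)
      · exact fun x hx => Or.inr ⟨g, hinf, hx⟩
      · exact fun x hx => Or.inl hx
  refine ⟨part1, part2, fun f => ?_⟩
  constructor
  · rintro ⟨hf, hmin⟩
    exact ⟨(part2 f).mp hf, fun g hg => hmin g ((part2 g).mpr hg)⟩
  · rintro ⟨hf, hmin⟩
    exact ⟨(part2 f).mpr hf, fun g hg => hmin g ((part2 g).mp hg)⟩
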